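/- (Q2 Margolis homology of tmf, Eq. (5).) Let Q2 : A → A be the F2-linear derivation determined by Q2(ζn) = ζ_{n−3}^8. Then Q2 restricts to T with Q2 ∘ Q2 = 0, the subalgebra F2[ζ2^4, ζ3^2, ζ4^2, ζ5^2, …] is contained in ker(Q2|T), and the induced F2-algebra map F2[ζ2^4, ζ3^2, ζ4^2, …] → M(T, Q2) = ker(Q2|T)/im(Q2|T) is surjective with kernel the ideal generated by {ζ2^8} ∪ {ζi^8 : i ≥ 3}; hence M(T, Q2) ≅ F2[ζ2^4, ζ3^2, ζ4^2, …]/(ζ2^8, ζ3^8, ζ4^8, …) as F2-algebras. -/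

import Mathlib

/-!
Common setup: the mod-2 dual Steenrod algebra model.
`A = F₂[ζ₁, ζ₂, …]` with variables indexed by `ℕ+`, conventions `ζ₀ = 1`, `ζₘ = 0` for `m < 0`.
`T = F₂[ζ₁⁸, ζ₂⁴, ζ₃², ζ₄, ζ₅, …]` (model for `H₋(tmf; F₂)`).
`Q1` is the derivation with `Q1 ζₙ = ζₙ₋₂⁴` and `P` (the right action of `P₂¹`) is the linear
map defined on monomials `ζ_{i₁} ⋯ ζ_{iₙ}` (repetitions allowed) by the sum over pairs of
factor positions `j < k` of the monomial with the `j`-th factor replaced by `ζ_{i_j-2}⁴` and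
the `k`-th factor replaced by `ζ_{i_k-2}⁴`.
-/

open MvPolynomial

noncomputable section

namespace Tmf

abbrev F : Type := ZMod 2

abbrev A : Type := MvPolynomial ℕ+ F

/-- `ζ n`, with the conventions `ζ 0 = 1` and `ζ m = 0` for `m < 0`. -/
def z (n : ℤ) : A :=
  if 0 < n then X n.toNat.toPNat' else if n = 0 then 1 else 0

/-- The Milnor primitive `Q₁`, the `F₂`-linear derivation with `Q₁(ζₙ) = ζₙ₋₂⁴`. -/
def Q1 : A →ₗ[F] A :=
  (mkDerivation F fun n : ℕ+ => z ((n : ℤ) - 2) ^ 4).toLinearMap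

/-- The value of (the right action of) `P₂¹` on the monomial with exponents `d`:
the sum over unordered pairs of factor positions of the result of replacing each of the two
chosen factors `ζ_i` by `ζ_{i-2}⁴`.  Pairs of positions carrying the same variable `ζ_n`
contribute `C(dₙ, 2)` equal terms, pairs with distinct variables `n < m` contribute
`dₙ · dₘ` equal terms. -/
def Pval (d : ℕ+ →₀ ℕ) : A :=
  (∑ n ∈ d.support, (((d n).choose 2 : ℕ) : F) •
      (monomial (d - Finsupp.single n 2) 1 * z ((n : ℤ) - 2) ^ 8)) +
  ∑ p ∈ (d.support ×ˢ d.support).filter fun p => p.1 < p.2,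
      ((d p.1 * d p.2 : ℕ) : F) •
      (monomial (d - Finsupp.single p.1 1 - Finsupp.single p.2 1) 1 *
        z ((p.1 : ℤ) - 2) ^ 4 * z ((p.2 : ℤ) - 2) ^ 4)

/-- The (right action of) `P₂¹` as an `F₂`-linear map on `A`, defined on the monomial basis. -/
def P : A →ₗ[F] A :=
  (basisMonomials ℕ+ F).constr F Pval

/-- `T = F₂[ζ₁⁸, ζ₂⁴, ζ₃², ζ₄, ζ₅, …] ⊆ A`, a model for `H₋(tmf; F₂)`. -/
def T : Subalgebra F A :=
  Algebra.adjoin F ({z 1 ^ 8, z 2 ^ 4, z 3 ^ 2} ∪ {a | ∃ n : ℤ, 4 ≤ n ∧ a = z n})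


/-- The Milnor primitive `Q₂`, the `F₂`-linear derivation with `Q₂(ζₙ) = ζₙ₋₃⁸`. -/
def Q2 : A →ₗ[F] A :=
  (mkDerivation F fun n : ℕ+ => z ((n : ℤ) - 3) ^ 8).toLinearMap

/-- The subalgebra `F₂[ζ₂⁴, ζ₃², ζ₄², ζ₅², …] ⊆ A`. -/
def C2 : Subalgebra F A :=
  Algebra.adjoin F ({z 2 ^ 4} ∪ {a | ∃ n : ℤ, 3 ≤ n ∧ a = z n ^ 2})

/-! ### Auxiliary development for the proof -/

section Aux

open Finsupp

lemma two_zero (x : A) : x + x = 0 := by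
  have h : (2 : F) • x = x + x := two_smul F x
  have h2 : (2 : F) = 0 := by decide
  rw [h2, zero_smul] at h
  exact h.symm

lemma pc {a b : ℕ+} : a = b ↔ (a : ℕ) = (b : ℕ) := PNat.coe_inj.symm

lemma pcoe1 : ((1 : ℕ+) : ℕ) = 1 := rfl
lemma pcoe2 : ((2 : ℕ+) : ℕ) = 2 := rfl
lemma pcoe3 : ((3 : ℕ+) : ℕ) = 3 := rfl

lemma padd3 (j : ℕ+) : ((j + 3 : ℕ+) : ℕ) = (j : ℕ) + 3 := by
  rw [PNat.add_coe, pcoe3]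

lemma pone_le (j : ℕ+) : 1 ≤ (j : ℕ) := j.pos

lemma pj3_ne (j : ℕ+) : j + 3 ≠ j := by
  rw [ne_eq, pc, padd3]; omega

lemma plt {a b : ℕ+} : a < b ↔ (a : ℕ) < (b : ℕ) := (PNat.coe_lt_coe a b).symm

lemma pnat_sub_add {n : ℕ+} (h : 4 ≤ (n : ℕ)) : (n - 3) + 3 = n := by
  have h3 : (3 : ℕ+) < n := by rw [plt, pcoe3]; omega
  rw [pc, padd3, PNat.sub_coe, if_pos h3, pcoe3]
  omega

lemma padd_sub (j : ℕ+) : (j + 3 : ℕ+) - 3 = j := by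
  have h3 : (3 : ℕ+) < j + 3 := by rw [plt, pcoe3, padd3]; have := pone_le j; omega
  rw [pc, PNat.sub_coe, if_pos h3, pcoe3, padd3]
  omega

/-! #### Facts about `z` -/

lemma z_pos' {m : ℤ} (h : 0 < m) : z m = X m.toNat.toPNat' := by rw [z, if_pos h]

lemma z_neg' {m : ℤ} (h : m < 0) : z m = 0 := by
  rw [z, if_neg (by omega), if_neg (by omega)]

lemma coe_toPNat {m : ℤ} (h : 0 < m) : ((m.toNat.toPNat' : ℕ) : ℤ) = m := by
  rw [PNat.toPNat'_coe (by omega : 0 < m.toNat)]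
  omega

lemma z_coe (n : ℕ+) : z ((n : ℕ) : ℤ) = X n := by
  rw [z_pos' (by exact_mod_cast n.pos)]
  congr 1
  rw [Int.toNat_natCast]
  exact PNat.coe_toPNat' n

lemma z_sub3 {n : ℕ+} (h : 4 ≤ (n : ℕ)) : z (((n : ℕ) : ℤ) - 3) = X (n - 3) := by
  rw [z_pos' (by omega)]
  congr 1
  have h1 : (((n : ℕ) : ℤ) - 3).toNat = (n : ℕ) - 3 := by omega
  apply PNat.coe_injective
  rw [h1, Nat.toPNat'_coe, if_pos (by omega), PNat.sub_coe, if_pos (by rw [plt, pcoe3]; omega),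
    pcoe3]

lemma z1_eq : z 1 = X 1 := by
  have := z_coe 1; rwa [pcoe1, Nat.cast_one] at this

lemma z2_eq : z 2 = X 2 := by
  have := z_coe 2; rwa [pcoe2, Nat.cast_two] at this

lemma z3_eq : z 3 = X 3 := by
  have := z_coe 3
  rwa [pcoe3, show ((3:ℕ):ℤ) = 3 by norm_num] at this

/-! #### Facts about `Q2` -/

lemma Q2_eq (x : A) : Q2 x = (mkDerivation F fun n : ℕ+ => z ((n : ℤ) - 3) ^ 8) x := rfl

lemma Q2_X (n : ℕ+) : Q2 (X n) = z (((n : ℕ) : ℤ) - 3) ^ 8 := by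
  rw [Q2_eq, mkDerivation_X]

lemma Q2_z {m : ℤ} (h : 1 ≤ m) : Q2 (z m) = z (m - 3) ^ 8 := by
  rw [z_pos' (by omega), Q2_X, coe_toPNat (by omega)]

lemma Q2_mul (a b : A) : Q2 (a * b) = a * Q2 b + b * Q2 a := by
  rw [Q2_eq, Derivation.leibniz, smul_eq_mul, smul_eq_mul, Q2_eq, Q2_eq]

lemma Q2_mul_self (a : A) : Q2 (a * a) = 0 := by
  rw [Q2_mul]; exact two_zero _

lemma Q2_C (r : F) : Q2 (C r) = 0 := by
  rw [Q2_eq]; exact derivation_C _ r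

lemma Q2_one : Q2 (1 : A) = 0 := by
  have := Q2_C 1; rwa [map_one] at this

/-! #### Cast helpers -/

lemma castF_eq_zero {k : ℕ} (h : k % 2 = 0) : (k : F) = 0 := by
  have h2 : (2:ℕ) ∣ k := by omega
  exact (ZMod.natCast_eq_zero_iff k 2).2 h2

lemma castF_eq_one {k : ℕ} (h : k % 2 = 1) : (k : F) = 1 := by
  obtain ⟨m, hm⟩ : ∃ m, k = 2 * m + 1 := ⟨k / 2, by omega⟩
  subst hm
  push_cast
  rw [show (2 : F) = 0 by decide]
  ring

/-! #### The basic finsupp operations -/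

/-- the `Q₂`-differential operation at the pair of positions `(j, j+3)`. -/
def Dj (j : ℕ+) (d : ℕ+ →₀ ℕ) : ℕ+ →₀ ℕ :=
  d - Finsupp.single (j + 3) 1 + Finsupp.single j 8

/-- the homotopy operation at the pair of positions `(j, j+3)`. -/
def Hj (j : ℕ+) (d : ℕ+ →₀ ℕ) : ℕ+ →₀ ℕ :=
  d - Finsupp.single j 8 + Finsupp.single (j + 3) 1

lemma Dj_apply_j (j : ℕ+) (d : ℕ+ →₀ ℕ) : Dj j d j = d j + 8 := by
  rw [Dj, Finsupp.add_apply, tsub_apply, single_apply, single_apply, if_neg (pj3_ne j), if_pos rfl,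
    Nat.sub_zero]

lemma Dj_apply_j3 (j : ℕ+) (d : ℕ+ →₀ ℕ) : Dj j d (j + 3) = d (j + 3) - 1 := by
  rw [Dj, Finsupp.add_apply, tsub_apply, single_apply, single_apply, if_pos rfl,
    if_neg (Ne.symm (pj3_ne j)), add_zero]

lemma Dj_apply_ne {j x : ℕ+} (d : ℕ+ →₀ ℕ) (h1 : x ≠ j + 3) (h2 : x ≠ j) : Dj j d x = d x := by
  rw [Dj, Finsupp.add_apply, tsub_apply, single_apply, single_apply, if_neg (Ne.symm h1),
    if_neg (Ne.symm h2), add_zero, Nat.sub_zero]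

lemma Hj_apply_j (j : ℕ+) (d : ℕ+ →₀ ℕ) : Hj j d j = d j - 8 := by
  rw [Hj, Finsupp.add_apply, tsub_apply, single_apply, single_apply, if_pos rfl,
    if_neg (pj3_ne j), add_zero]

lemma Hj_apply_j3 (j : ℕ+) (d : ℕ+ →₀ ℕ) : Hj j d (j + 3) = d (j + 3) + 1 := by
  rw [Hj, Finsupp.add_apply, tsub_apply, single_apply, single_apply, if_neg (Ne.symm (pj3_ne j)),
    if_pos rfl, Nat.sub_zero]

lemma Hj_apply_ne {j x : ℕ+} (d : ℕ+ →₀ ℕ) (h1 : x ≠ j + 3) (h2 : x ≠ j) : Hj j d x = d x := by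
  rw [Hj, Finsupp.add_apply, tsub_apply, single_apply, single_apply, if_neg (Ne.symm h2),
    if_neg (Ne.symm h1), add_zero, Nat.sub_zero]

lemma Dj_mod {j x : ℕ+} (d : ℕ+ →₀ ℕ) (h : x ≠ j + 3) : Dj j d x % 2 = d x % 2 := by
  by_cases hx : x = j
  · subst hx; rw [Dj_apply_j]; omega
  · rw [Dj_apply_ne d h hx]

lemma Hj_mod {j x : ℕ+} (d : ℕ+ →₀ ℕ) (h : x ≠ j + 3) (h8 : 8 ≤ d j) :
    Hj j d x % 2 = d x % 2 := by
  by_cases hx : x = j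
  · subst hx; rw [Hj_apply_j]; omega
  · rw [Hj_apply_ne d h hx]

/-! #### The index set of the `Q2`-differential of a monomial -/

open scoped Classical in
/-- positions `j` such that `ζ_{j+3}` occurs with odd exponent. -/
noncomputable def Jset (d : ℕ+ →₀ ℕ) : Finset ℕ+ :=
  (d.support.image (fun n => n - 3)).filter (fun j => Odd (d (j + 3)))

lemma mem_Jset {d : ℕ+ →₀ ℕ} {j : ℕ+} : j ∈ Jset d ↔ Odd (d (j + 3)) := by
  classical
  constructor
  · intro h
    have := Finset.mem_filter.1 h
    convert this.2 using 2
  · intro h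
    apply Finset.mem_filter.2
    refine ⟨Finset.mem_image.2 ⟨j + 3, ?_, padd_sub j⟩, by convert h using 2⟩
    rw [Finsupp.mem_support_iff]
    rw [Nat.odd_iff] at h
    omega

/-- The conditions on exponents of monomials in `T`. -/
def Tc (d : ℕ+ →₀ ℕ) : Prop := 8 ∣ d 1 ∧ 4 ∣ d 2 ∧ 2 ∣ d 3

/-- The conditions on exponents of monomials in `C2`. -/
def Cc (d : ℕ+ →₀ ℕ) : Prop := d 1 = 0 ∧ 4 ∣ d 2 ∧ ∀ n : ℕ+, 3 ≤ (n : ℕ) → 2 ∣ d n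

lemma Q2_monomial {d : ℕ+ →₀ ℕ} (hd : Tc d) :
    Q2 (monomial d 1) = ∑ j ∈ Jset d, monomial (Dj j d) 1 := by
  classical
  rw [Q2_eq, mkDerivation_monomial, one_smul, Finsupp.sum]
  have step1 : ∀ n ∈ d.support,
      (monomial (d - Finsupp.single n 1) ((d n : F))) • z (((n : ℤ)) - 3) ^ 8
        = if 4 ≤ (n : ℕ) ∧ Odd (d n) then monomial (Dj (n - 3) d) 1 else 0 := by
    intro n _
    have hcast : ((n : ℤ)) = (((n : ℕ) : ℤ)) := rfl
    by_cases h4 : 4 ≤ (n : ℕ)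
    · by_cases ho : Odd (d n)
      · rw [if_pos ⟨h4, ho⟩, hcast, z_sub3 h4, castF_eq_one (Nat.odd_iff.1 ho),
          X_pow_eq_monomial, smul_eq_mul, monomial_mul, one_mul, Dj, pnat_sub_add h4]
      · rw [if_neg (by tauto), castF_eq_zero (by rw [Nat.odd_iff] at ho; omega),
          monomial_zero, zero_smul]
    · rw [if_neg (by tauto)]
      have h123 : n = 1 ∨ n = 2 ∨ n = 3 := by
        rw [pc, pc, pc, pcoe1, pcoe2, pcoe3]
        have := pone_le n
        omega
      rcases h123 with rfl | rfl | rfl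
      · rw [hcast, pcoe1, show (((1:ℕ):ℤ)) - 3 = -2 by norm_num, z_neg' (by norm_num)]
        rw [zero_pow (by norm_num), smul_zero]
      · rw [hcast, pcoe2, show (((2:ℕ):ℤ)) - 3 = -1 by norm_num, z_neg' (by norm_num)]
        rw [zero_pow (by norm_num), smul_zero]
      · rw [castF_eq_zero (by obtain ⟨k, hk⟩ := hd.2.2; omega), monomial_zero, zero_smul]
  rw [Finset.sum_congr rfl step1, ← Finset.sum_filter]
  apply Finset.sum_bij (fun n _ => n - 3)
  · intro a ha
    have h := Finset.mem_filter.1 ha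
    apply mem_Jset.2
    rw [pnat_sub_add h.2.1]
    exact h.2.2
  · intro a ha b hb hab
    have h4a := (Finset.mem_filter.1 ha).2.1
    have h4b := (Finset.mem_filter.1 hb).2.1
    have := congrArg (fun t : ℕ+ => t + 3) hab
    simpa [pnat_sub_add h4a, pnat_sub_add h4b] using this
  · intro b hb
    have hob := mem_Jset.1 hb
    refine ⟨b + 3, Finset.mem_filter.2 ⟨?_, ?_, hob⟩, padd_sub b⟩
    · rw [Finsupp.mem_support_iff]; rw [Nat.odd_iff] at hob; omega
    · rw [padd3]; have := pone_le b; omega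
  · intro a ha
    rfl

/-! #### The homotopy machinery -/

/-- position `j` is "bad" (not in reduced/homology form). -/
def badp (d : ℕ+ →₀ ℕ) (j : ℕ+) : Prop := Odd (d (j + 3)) ∨ 8 ≤ d j

/-- bad positions, as a predicate on `ℕ`. -/
def badq (d : ℕ+ →₀ ℕ) (k : ℕ) : Prop := badp d k.succPNat

lemma JmN_ex (d : ℕ+ →₀ ℕ) (hx : ∃ j, badp d j) : ∃ k, badq d k :=
  ⟨(Classical.choose hx).natPred, show badp d _ by
    rw [PNat.succPNat_natPred]; exact Classical.choose_spec hx⟩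

/-- index of the least bad position. -/
noncomputable def JmN (d : ℕ+ →₀ ℕ) (hx : ∃ j, badp d j) : ℕ :=
  @Nat.find (badq d) (Classical.decPred _) (JmN_ex d hx)

/-- the least bad position. -/
noncomputable def Jm (d : ℕ+ →₀ ℕ) (hx : ∃ j, badp d j) : ℕ+ := (JmN d hx).succPNat

lemma Jm_bad (d : ℕ+ →₀ ℕ) (hx : ∃ j, badp d j) : badp d (Jm d hx) :=
  @Nat.find_spec (badq d) (Classical.decPred _) (JmN_ex d hx)

lemma Jm_min (d : ℕ+ →₀ ℕ) (hx : ∃ j, badp d j) {j : ℕ+} (hj : j < Jm d hx) : ¬ badp d j := by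
  have h1 : j.natPred < JmN d hx := by
    rw [plt] at hj
    unfold Jm at hj
    rw [Nat.succPNat_coe] at hj
    have : j.natPred = (j : ℕ) - 1 := rfl
    have := pone_le j
    omega
  have h2 : ¬ badq d j.natPred :=
    @Nat.find_min (badq d) (Classical.decPred _) (JmN_ex d hx) _ h1
  unfold badq at h2
  rwa [PNat.succPNat_natPred] at h2

lemma Jm_le (d : ℕ+ →₀ ℕ) (hx : ∃ j, badp d j) {j : ℕ+} (hb : badp d j) : Jm d hx ≤ j :=
  le_of_not_gt fun h => Jm_min d hx h hb

open scoped Classical in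
/-- The value of the contracting homotopy on the monomial with exponents `d`. -/
noncomputable def hval (d : ℕ+ →₀ ℕ) : A :=
  if hx : ∃ j, badp d j then
    if Odd (d (Jm d hx + 3)) then 0 else monomial (Hj (Jm d hx) d) 1
  else 0

open scoped Classical in
/-- The value of the projection onto reduced monomials. -/
noncomputable def Rval (d : ℕ+ →₀ ℕ) : A := if ∃ j, badp d j then 0 else monomial d 1

/-- The contracting homotopy as a linear map. -/
noncomputable def hmap : A →ₗ[F] A := (basisMonomials ℕ+ F).constr F hval

/-- The projection onto reduced monomials as a linear map. -/
noncomputable def Rmap : A →ₗ[F] A := (basisMonomials ℕ+ F).constr F Rval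

lemma hmap_monomial (d : ℕ+ →₀ ℕ) : hmap (monomial d 1) = hval d := by
  have h : (monomial d 1 : A) = basisMonomials ℕ+ F d := by rw [coe_basisMonomials]
  rw [h, hmap, Module.Basis.constr_basis]

lemma Rmap_monomial (d : ℕ+ →₀ ℕ) : Rmap (monomial d 1) = Rval d := by
  have h : (monomial d 1 : A) = basisMonomials ℕ+ F d := by rw [coe_basisMonomials]
  rw [h, Rmap, Module.Basis.constr_basis]

lemma notbad_low {d : ℕ+ →₀ ℕ} {J j : ℕ+} (hmin : ∀ i, i < J → ¬ badp d i) (hJj : J ≤ j) :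
    ∀ i, i < J → ¬ badp (Dj j d) i := by
  intro i hi hbad
  have hni := hmin i hi
  rw [badp, not_or] at hni
  obtain ⟨hodd, h8⟩ := hni
  have hij : (i : ℕ) < (j : ℕ) := by
    rw [plt] at hi
    have := (PNat.coe_le_coe J j).2 hJj
    omega
  cases hbad with
  | inl ho =>
      apply hodd
      have hne : (i + 3 : ℕ+) ≠ j + 3 := by rw [ne_eq, pc, padd3, padd3]; omega
      rwa [Nat.odd_iff, Dj_mod d hne, ← Nat.odd_iff] at ho
  | inr h8' =>
      have h1 : i ≠ j + 3 := by rw [ne_eq, pc, padd3]; omega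
      have h2 : i ≠ j := by rw [ne_eq, pc]; omega
      rw [Dj_apply_ne d h1 h2] at h8'
      omega

lemma Jm_Dj (d : ℕ+ →₀ ℕ) (hx : ∃ i, badp d i) {j : ℕ+} (hJj : Jm d hx ≤ j)
    (hodd : Odd (d (j + 3))) :
    ∃ hx' : ∃ i, badp (Dj j d) i, Jm (Dj j d) hx' = Jm d hx := by
  have hbadJ : badp (Dj j d) (Jm d hx) := by
    rcases eq_or_lt_of_le hJj with heq | hlt
    · right; rw [heq, Dj_apply_j]; omega
    · have hcoe : ((Jm d hx : ℕ+) : ℕ) < (j : ℕ) := plt.1 hlt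
      cases Jm_bad d hx with
      | inl ho =>
          left
          have hne : (Jm d hx + 3 : ℕ+) ≠ j + 3 := by rw [ne_eq, pc, padd3, padd3]; omega
          rwa [Nat.odd_iff, Dj_mod d hne, ← Nat.odd_iff]
      | inr h8 =>
          right
          have h1 : Jm d hx ≠ j + 3 := by rw [ne_eq, pc, padd3]; omega
          have h2 : Jm d hx ≠ j := by rw [ne_eq, pc]; omega
          rwa [Dj_apply_ne d h1 h2]
  refine ⟨⟨_, hbadJ⟩, ?_⟩
  apply le_antisymm (Jm_le _ _ hbadJ)
  by_contra hlt
  push_neg at hlt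
  exact notbad_low (fun i hi => Jm_min d hx hi) hJj _ hlt (Jm_bad _ _)

lemma hval_Dj_self (d : ℕ+ →₀ ℕ) (hx : ∃ i, badp d i) (hodd : Odd (d (Jm d hx + 3))) :
    hval (Dj (Jm d hx) d) = monomial d 1 := by
  classical
  obtain ⟨hx', hJm⟩ := Jm_Dj d hx le_rfl hodd
  have hoddn := Nat.odd_iff.1 hodd
  rw [hval, dif_pos hx', hJm, if_neg (by rw [Nat.odd_iff, Dj_apply_j3]; omega)]
  have key : Hj (Jm d hx) (Dj (Jm d hx) d) = d := by
    ext x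
    by_cases h3 : x = Jm d hx + 3
    · subst h3; rw [Hj_apply_j3, Dj_apply_j3]; omega
    · by_cases hJx : x = Jm d hx
      · subst hJx; rw [Hj_apply_j, Dj_apply_j]; omega
      · rw [Hj_apply_ne _ h3 hJx, Dj_apply_ne _ h3 hJx]
  rw [key]

lemma hval_Dj_zero (d : ℕ+ →₀ ℕ) (hx : ∃ i, badp d i) {j : ℕ+} (hlt : Jm d hx < j)
    (hoJ : Odd (d (Jm d hx + 3))) (hoj : Odd (d (j + 3))) :
    hval (Dj j d) = 0 := by
  classical
  obtain ⟨hx', hJm⟩ := Jm_Dj d hx hlt.le hoj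
  have hcoe := plt.1 hlt
  have hne : (Jm d hx + 3 : ℕ+) ≠ j + 3 := by rw [ne_eq, pc, padd3, padd3]; omega
  rw [hval, dif_pos hx', hJm, if_pos (by rwa [Nat.odd_iff, Dj_mod d hne, ← Nat.odd_iff])]

lemma hval_Dj_comm (d : ℕ+ →₀ ℕ) (hx : ∃ i, badp d i) {j : ℕ+} (hlt : Jm d hx < j)
    (hev : ¬ Odd (d (Jm d hx + 3))) (h8 : 8 ≤ d (Jm d hx)) (hoj : Odd (d (j + 3))) :
    hval (Dj j d) = monomial (Dj j (Hj (Jm d hx) d)) 1 := by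
  classical
  obtain ⟨hx', hJm⟩ := Jm_Dj d hx hlt.le hoj
  set J := Jm d hx with hJdef
  have hcoe : (J : ℕ) < (j : ℕ) := plt.1 hlt
  have hd1 : 1 ≤ d (j + 3) := by rw [Nat.odd_iff] at hoj; omega
  have hJne3 : (J + 3 : ℕ+) ≠ j + 3 := by rw [ne_eq, pc, padd3, padd3]; omega
  rw [hval, dif_pos hx', hJm, if_neg ?par]
  case par =>
    intro ho
    apply hev
    rwa [Nat.odd_iff, Dj_mod d hJne3, ← Nat.odd_iff] at ho
  -- Hj J (Dj j d) = Dj j (Hj J d)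
  have hJnej3 : J ≠ j + 3 := by rw [ne_eq, pc, padd3]; omega
  have hJnej : J ≠ j := by rw [ne_eq, pc]; omega
  have hj3neJ3 : (j + 3 : ℕ+) ≠ J + 3 := Ne.symm hJne3
  have hj3neJ : (j + 3 : ℕ+) ≠ J := by rw [ne_eq, pc, padd3]; omega
  have hjneJ : j ≠ J := Ne.symm hJnej
  have key : Hj J (Dj j d) = Dj j (Hj J d) := by
   ext x
   by_cases h1 : x = J
   · subst h1
     rw [Hj_apply_j, Dj_apply_ne _ hJnej3 hJnej, Dj_apply_ne _ hJnej3 hJnej, Hj_apply_j]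
   · by_cases h2 : x = j + 3
     · subst h2
       rw [Hj_apply_ne _ hj3neJ3 hj3neJ, Dj_apply_j3, Dj_apply_j3,
         Hj_apply_ne _ hj3neJ3 hj3neJ]
     · by_cases h3 : x = j
       · rw [h3]
         by_cases h4 : j = J + 3
         · rw [show Hj J (Dj j d) j = Dj j d j + 1 by rw [h4]; exact Hj_apply_j3 J _,
             Dj_apply_j, Dj_apply_j, show (Hj J d) j = d j + 1 by rw [h4]; exact Hj_apply_j3 J d]
         · rw [Hj_apply_ne _ h4 hjneJ, Dj_apply_j, Dj_apply_j, Hj_apply_ne _ h4 hjneJ]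
       · by_cases h5 : x = J + 3
         · subst h5
           rw [Hj_apply_j3, Dj_apply_ne _ hJne3 (fun h => h3 h),
             Dj_apply_ne _ hJne3 (fun h => h3 h), Hj_apply_j3]
         · rw [Hj_apply_ne _ h5 h1, Dj_apply_ne _ h2 h3, Dj_apply_ne _ h2 h3,
             Hj_apply_ne _ h5 h1]
  rw [key]

lemma Jset_Hj (d : ℕ+ →₀ ℕ) {J : ℕ+} (hev : ¬ Odd (d (J + 3))) (h8 : 8 ≤ d J) :
    Jset (Hj J d) = insert J (Jset d) := by
  ext j
  rw [mem_Jset, Finset.mem_insert, mem_Jset]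
  by_cases hj : j = J
  · subst hj
    simp only [true_or, iff_true]
    rw [Nat.odd_iff, Hj_apply_j3]
    rw [Nat.odd_iff] at hev
    omega
  · have hne : (j + 3 : ℕ+) ≠ J + 3 := by
      intro h; apply hj
      rw [pc] at h ⊢; rw [padd3, padd3] at h; omega
    rw [Nat.odd_iff, Hj_mod d hne h8, ← Nat.odd_iff]
    constructor
    · exact Or.inr
    · rintro (h | h)
      · exact absurd h hj
      · exact h

lemma DjHj_eq (d : ℕ+ →₀ ℕ) {J : ℕ+} (h8 : 8 ≤ d J) : Dj J (Hj J d) = d := by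
  ext x
  by_cases h1 : x = J
  · subst h1; rw [Dj_apply_j, Hj_apply_j]; omega
  · by_cases h2 : x = J + 3
    · subst h2; rw [Dj_apply_j3, Hj_apply_j3]; omega
    · rw [Dj_apply_ne _ h2 h1, Hj_apply_ne _ h2 h1]

lemma Tc_Hj {d : ℕ+ →₀ ℕ} {J : ℕ+} (hd : Tc d) (h8 : 8 ≤ d J) : Tc (Hj J d) := by
  obtain ⟨h1, h2, h3⟩ := hd
  have key : ∀ c : ℕ+, (c : ℕ) ≤ 3 → Hj J d c = d c - (if c = J then 8 else 0) := by
    intro c hc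
    by_cases h : c = J
    · rw [if_pos h, h, Hj_apply_j]
    · rw [if_neg h, Hj_apply_ne _ (by rw [ne_eq, pc, padd3]; have := pone_le J; omega) h]
      omega
  refine ⟨?_, ?_, ?_⟩
  · rw [key 1 (by rw [pcoe1]; omega)]
    by_cases h : (1 : ℕ+) = J
    · rw [if_pos h]; rw [← h] at h8; omega
    · rw [if_neg h]; omega
  · rw [key 2 (by rw [pcoe2]; omega)]
    by_cases h : (2 : ℕ+) = J
    · rw [if_pos h]; rw [← h] at h8; omega
    · rw [if_neg h]; omega
  · rw [key 3 pcoe3.le]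
    by_cases h : (3 : ℕ+) = J
    · rw [if_pos h]; rw [← h] at h8; omega
    · rw [if_neg h]; omega

/-- The key homotopy identity, on monomials of `T`. -/
lemma KEY {d : ℕ+ →₀ ℕ} (hd : Tc d) :
    Q2 (hmap (monomial d 1)) + hmap (Q2 (monomial d 1))
      = monomial d 1 + Rmap (monomial d 1) := by
  classical
  rw [hmap_monomial, Rmap_monomial, Q2_monomial hd, map_sum]
  simp only [hmap_monomial]
  by_cases hx : ∃ i, badp d i
  · rw [Rval, if_pos hx, add_zero]
    by_cases hodd : Odd (d (Jm d hx + 3))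
    · -- B2 : least bad position has odd exponent
      rw [hval, dif_pos hx, if_pos hodd, map_zero, zero_add]
      rw [Finset.sum_eq_single (Jm d hx)]
      · exact hval_Dj_self d hx hodd
      · intro j hj hne
        have hoj := mem_Jset.1 hj
        have hlt : Jm d hx < j := lt_of_le_of_ne (Jm_le d hx (Or.inl hoj)) (Ne.symm hne)
        exact hval_Dj_zero d hx hlt hodd hoj
      · intro hJin
        exact absurd (mem_Jset.2 hodd) hJin
    · -- B1 : least bad position has even exponent, so big exponent below
      have h8 : 8 ≤ d (Jm d hx) := (Jm_bad d hx).resolve_left hodd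
      rw [hval, dif_pos hx, if_neg hodd]
      rw [Q2_monomial (Tc_Hj hd h8), Jset_Hj d hodd h8,
        Finset.sum_insert (fun h => hodd (mem_Jset.1 h)), DjHj_eq d h8]
      have hcong : ∀ j ∈ Jset d, hval (Dj j d) = monomial (Dj j (Hj (Jm d hx) d)) 1 := by
        intro j hj
        have hoj := mem_Jset.1 hj
        have hlt : Jm d hx < j :=
          lt_of_le_of_ne (Jm_le d hx (Or.inl hoj)) (by rintro rfl; exact hodd hoj)
        exact hval_Dj_comm d hx hlt hodd h8 hoj
      rw [Finset.sum_congr rfl hcong, add_assoc, two_zero, add_zero]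
  · rw [hval, dif_neg hx, Rval, if_neg hx]
    have hJ : Jset d = ∅ := by
      apply Finset.eq_empty_of_forall_notMem
      intro j hj
      exact hx ⟨j, Or.inl (mem_Jset.1 hj)⟩
    rw [hJ, Finset.sum_empty, map_zero, add_zero]
    exact (two_zero _).symm

/-! #### Membership characterizations -/

lemma gen_z18_T : (z 1 ^ 8 : A) ∈ T := Algebra.subset_adjoin (by simp [T])

lemma gen_z24_T : (z 2 ^ 4 : A) ∈ T := Algebra.subset_adjoin (by simp [T])

lemma gen_z32_T : (z 3 ^ 2 : A) ∈ T := Algebra.subset_adjoin (by simp [T])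

lemma gen_zn_T {n : ℤ} (hn : 4 ≤ n) : (z n : A) ∈ T :=
  Algebra.subset_adjoin (Set.subset_union_right ⟨n, hn, rfl⟩)

lemma gen_z24_C2 : (z 2 ^ 4 : A) ∈ C2 := Algebra.subset_adjoin (by simp [C2])

lemma gen_zn2_C2 {n : ℤ} (hn : 3 ≤ n) : (z n ^ 2 : A) ∈ C2 :=
  Algebra.subset_adjoin (Set.subset_union_right ⟨n, hn, rfl⟩)

lemma X_mem_T {a : ℕ+} (h4 : 4 ≤ (a : ℕ)) : (X a : A) ∈ T := by
  have h := gen_zn_T (n := ((a : ℕ) : ℤ)) (by exact_mod_cast h4)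
  rwa [z_coe] at h

lemma Xpow_mem_T {a : ℕ+} (b : ℕ) (h1 : a = 1 → 8 ∣ b) (h2 : a = 2 → 4 ∣ b)
    (h3 : a = 3 → 2 ∣ b) : (X a : A) ^ b ∈ T := by
  by_cases e1 : a = 1
  · subst e1
    obtain ⟨k, rfl⟩ := h1 rfl
    rw [pow_mul, ← z1_eq]
    exact pow_mem gen_z18_T k
  · by_cases e2 : a = 2
    · subst e2
      obtain ⟨k, rfl⟩ := h2 rfl
      rw [pow_mul, ← z2_eq]
      exact pow_mem gen_z24_T k
    · by_cases e3 : a = 3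
      · subst e3
        obtain ⟨k, rfl⟩ := h3 rfl
        rw [pow_mul, ← z3_eq]
        exact pow_mem gen_z32_T k
      · apply pow_mem
        apply X_mem_T
        rw [pc, pcoe1] at e1; rw [pc, pcoe2] at e2; rw [pc, pcoe3] at e3
        have := pone_le a; omega

lemma X_sq_mem_C2 {a : ℕ+} (h3 : 3 ≤ (a : ℕ)) : (X a : A) ^ 2 ∈ C2 := by
  have h := gen_zn2_C2 (n := ((a : ℕ) : ℤ)) (by exact_mod_cast h3)
  rwa [z_coe] at h

lemma Xpow_mem_C2 {a : ℕ+} (b : ℕ) (h1 : a = 1 → b = 0) (h2 : a = 2 → 4 ∣ b)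
    (h3 : 3 ≤ (a : ℕ) → 2 ∣ b) : (X a : A) ^ b ∈ C2 := by
  by_cases e1 : a = 1
  · subst e1; rw [h1 rfl, pow_zero]; exact one_mem _
  · by_cases e2 : a = 2
    · subst e2
      obtain ⟨k, rfl⟩ := h2 rfl
      rw [pow_mul, ← z2_eq]
      exact pow_mem gen_z24_C2 k
    · have ha3 : 3 ≤ (a : ℕ) := by
        rw [pc, pcoe1] at e1; rw [pc, pcoe2] at e2
        have := pone_le a; omega
      obtain ⟨k, rfl⟩ := h3 ha3
      rw [pow_mul]
      exact pow_mem (X_sq_mem_C2 ha3) k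

lemma monomial_mem_T : ∀ {d : ℕ+ →₀ ℕ}, Tc d → (monomial d 1 : A) ∈ T := by
  intro d
  induction d using Finsupp.induction with
  | zero => intro _; simpa using one_mem T
  | single_add a b f haf hb ih =>
      intro hd
      have hfa : f a = 0 := Finsupp.notMem_support_iff.1 haf
      have happ : ∀ c : ℕ+, (Finsupp.single a b + f) c = (if a = c then b else 0) + f c := by
        intro c; rw [Finsupp.add_apply, Finsupp.single_apply]
      obtain ⟨hd1, hd2, hd3⟩ := hd
      rw [happ 1] at hd1; rw [happ 2] at hd2; rw [happ 3] at hd3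
      have hTf : Tc f := by
        refine ⟨?_, ?_, ?_⟩
        · by_cases h : a = 1
          · rw [← h, hfa]; exact dvd_zero _
          · rw [if_neg h, zero_add] at hd1; exact hd1
        · by_cases h : a = 2
          · rw [← h, hfa]; exact dvd_zero _
          · rw [if_neg h, zero_add] at hd2; exact hd2
        · by_cases h : a = 3
          · rw [← h, hfa]; exact dvd_zero _
          · rw [if_neg h, zero_add] at hd3; exact hd3
      have hb1 : a = 1 → 8 ∣ b := by
        intro h; subst h; rw [if_pos rfl, hfa, add_zero] at hd1; exact hd1
      have hb2 : a = 2 → 4 ∣ b := by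
        intro h; subst h; rw [if_pos rfl, hfa, add_zero] at hd2; exact hd2
      have hb3 : a = 3 → 2 ∣ b := by
        intro h; subst h; rw [if_pos rfl, hfa, add_zero] at hd3; exact hd3
      rw [show monomial (Finsupp.single a b + f) (1 : F)
          = monomial (Finsupp.single a b) 1 * monomial f 1 by rw [monomial_mul, one_mul]]
      exact mul_mem (by rw [← X_pow_eq_monomial]; exact Xpow_mem_T b hb1 hb2 hb3) (ih hTf)

lemma monomial_mem_C2 : ∀ {d : ℕ+ →₀ ℕ}, Cc d → (monomial d 1 : A) ∈ C2 := by
  intro d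
  induction d using Finsupp.induction with
  | zero => intro _; simpa using one_mem C2
  | single_add a b f haf hb ih =>
      intro hd
      have hfa : f a = 0 := Finsupp.notMem_support_iff.1 haf
      have happ : ∀ c : ℕ+, (Finsupp.single a b + f) c = (if a = c then b else 0) + f c := by
        intro c; rw [Finsupp.add_apply, Finsupp.single_apply]
      obtain ⟨hd1, hd2, hd3⟩ := hd
      rw [happ 1] at hd1; rw [happ 2] at hd2
      have hCf : Cc f := by
        refine ⟨?_, ?_, ?_⟩
        · by_cases h : a = 1
          · rw [← h, hfa]
          · rw [if_neg h, zero_add] at hd1; exact hd1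
        · by_cases h : a = 2
          · rw [← h, hfa]; exact dvd_zero _
          · rw [if_neg h, zero_add] at hd2; exact hd2
        · intro n hn
          have := hd3 n hn
          rw [happ n] at this
          by_cases h : a = n
          · rw [← h, hfa]; exact dvd_zero _
          · rw [if_neg h, zero_add] at this; exact this
      have hb1 : a = 1 → b = 0 := by
        intro h; subst h; rw [if_pos rfl, hfa, add_zero] at hd1; exact hd1
      have hb2 : a = 2 → 4 ∣ b := by
        intro h; subst h; rw [if_pos rfl, hfa, add_zero] at hd2; exact hd2
      have hb3 : 3 ≤ (a : ℕ) → 2 ∣ b := by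
        intro h
        have := hd3 a h
        rw [happ a, if_pos rfl, hfa, add_zero] at this
        exact this
      rw [show monomial (Finsupp.single a b + f) (1 : F)
          = monomial (Finsupp.single a b) 1 * monomial f 1 by rw [monomial_mul, one_mul]]
      exact mul_mem (by rw [← X_pow_eq_monomial]; exact Xpow_mem_C2 b hb1 hb2 hb3) (ih hCf)

/-! #### Span characterizations -/

/-- Monomials of `T`. -/
def TM : Set A := {x | ∃ d, Tc d ∧ x = monomial d 1}

/-- Monomials of `C2`. -/
def CM : Set A := {x | ∃ d, Cc d ∧ x = monomial d 1}

lemma Tc_add {d e : ℕ+ →₀ ℕ} (hd : Tc d) (he : Tc e) : Tc (d + e) := by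
  obtain ⟨a1, a2, a3⟩ := hd; obtain ⟨b1, b2, b3⟩ := he
  refine ⟨?_, ?_, ?_⟩ <;> rw [Finsupp.add_apply] <;> omega

lemma Cc_add {d e : ℕ+ →₀ ℕ} (hd : Cc d) (he : Cc e) : Cc (d + e) := by
  obtain ⟨a1, a2, a3⟩ := hd; obtain ⟨b1, b2, b3⟩ := he
  refine ⟨?_, ?_, ?_⟩
  · rw [Finsupp.add_apply]; omega
  · rw [Finsupp.add_apply]; omega
  · intro n hn; have := a3 n hn; have := b3 n hn; rw [Finsupp.add_apply]; omega

lemma Tspan_mul_mem : ∀ x ∈ Submodule.span F TM, ∀ y ∈ Submodule.span F TM,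
    x * y ∈ Submodule.span F TM := by
  intro x hx
  induction hx using Submodule.span_induction with
  | mem a ha =>
      intro y hy
      induction hy using Submodule.span_induction with
      | mem b hb =>
          obtain ⟨d, hd, rfl⟩ := ha
          obtain ⟨e, he, rfl⟩ := hb
          apply Submodule.subset_span
          exact ⟨d + e, Tc_add hd he, by rw [monomial_mul, one_mul]⟩
      | zero => rw [mul_zero]; exact zero_mem _
      | add y z _ _ ihy ihz => rw [mul_add]; exact add_mem ihy ihz
      | smul r y _ ihy => rw [mul_smul_comm]; exact Submodule.smul_mem _ _ ihy
  | zero => intro y _; rw [zero_mul]; exact zero_mem _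
  | add a b _ _ iha ihb => intro y hy; rw [add_mul]; exact add_mem (iha y hy) (ihb y hy)
  | smul r a _ iha => intro y hy; rw [smul_mul_assoc]; exact Submodule.smul_mem _ _ (iha y hy)

lemma Cspan_mul_mem : ∀ x ∈ Submodule.span F CM, ∀ y ∈ Submodule.span F CM,
    x * y ∈ Submodule.span F CM := by
  intro x hx
  induction hx using Submodule.span_induction with
  | mem a ha =>
      intro y hy
      induction hy using Submodule.span_induction with
      | mem b hb =>
          obtain ⟨d, hd, rfl⟩ := ha
          obtain ⟨e, he, rfl⟩ := hb
          apply Submodule.subset_span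
          exact ⟨d + e, Cc_add hd he, by rw [monomial_mul, one_mul]⟩
      | zero => rw [mul_zero]; exact zero_mem _
      | add y z _ _ ihy ihz => rw [mul_add]; exact add_mem ihy ihz
      | smul r y _ ihy => rw [mul_smul_comm]; exact Submodule.smul_mem _ _ ihy
  | zero => intro y _; rw [zero_mul]; exact zero_mem _
  | add a b _ _ iha ihb => intro y hy; rw [add_mul]; exact add_mem (iha y hy) (ihb y hy)
  | smul r a _ iha => intro y hy; rw [smul_mul_assoc]; exact Submodule.smul_mem _ _ (iha y hy)

lemma Tc_zero : Tc 0 := ⟨by simp, by simp, by simp⟩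

lemma Cc_zero : Cc 0 := ⟨by simp, by simp, by intro n _; simp⟩

lemma one_mem_Tspan : (1 : A) ∈ Submodule.span F TM :=
  Submodule.subset_span ⟨0, Tc_zero, by rw [monomial_zero', C_1]⟩

lemma one_mem_Cspan : (1 : A) ∈ Submodule.span F CM :=
  Submodule.subset_span ⟨0, Cc_zero, by rw [monomial_zero', C_1]⟩

lemma mem_Tspan {x : A} (hx : x ∈ T) : x ∈ Submodule.span F TM := by
  have hx' : x ∈ Algebra.adjoin F
      (({z 1 ^ 8, z 2 ^ 4, z 3 ^ 2} : Set A) ∪ {a | ∃ n : ℤ, 4 ≤ n ∧ a = z n}) := hx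
  clear hx
  induction hx' using Algebra.adjoin_induction with
  | mem g hg =>
      apply Submodule.subset_span
      rcases hg with hg | ⟨n, hn, rfl⟩
      · simp only [Set.mem_insert_iff, Set.mem_singleton_iff] at hg
        rcases hg with rfl | rfl | rfl
        · refine ⟨Finsupp.single 1 8, ?_, by rw [z1_eq, X_pow_eq_monomial]⟩
          refine ⟨?_, ?_, ?_⟩ <;> rw [Finsupp.single_apply]
          · rw [if_pos rfl]
          · rw [if_neg (by decide)]; exact dvd_zero _
          · rw [if_neg (by decide)]; exact dvd_zero _
        · refine ⟨Finsupp.single 2 4, ?_, by rw [z2_eq, X_pow_eq_monomial]⟩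
          refine ⟨?_, ?_, ?_⟩ <;> rw [Finsupp.single_apply]
          · rw [if_neg (by decide)]; exact dvd_zero _
          · rw [if_pos rfl]
          · rw [if_neg (by decide)]; exact dvd_zero _
        · refine ⟨Finsupp.single 3 2, ?_, by rw [z3_eq, X_pow_eq_monomial]⟩
          refine ⟨?_, ?_, ?_⟩ <;> rw [Finsupp.single_apply]
          · rw [if_neg (by decide)]; exact dvd_zero _
          · rw [if_neg (by decide)]; exact dvd_zero _
          · rw [if_pos rfl]
      · have hm : 4 ≤ ((n.toNat.toPNat' : ℕ)) := by
          rw [PNat.toPNat'_coe (by omega : 0 < n.toNat)]; omega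
        refine ⟨Finsupp.single n.toNat.toPNat' 1, ?_, ?_⟩
        · refine ⟨?_, ?_, ?_⟩ <;> rw [Finsupp.single_apply]
          · rw [if_neg (by rw [pc, pcoe1]; omega)]; exact dvd_zero _
          · rw [if_neg (by rw [pc, pcoe2]; omega)]; exact dvd_zero _
          · rw [if_neg (by rw [pc, pcoe3]; omega)]; exact dvd_zero _
        · rw [z_pos' (by omega), ← pow_one (X n.toNat.toPNat' : A), X_pow_eq_monomial]
  | algebraMap r =>
      rw [Algebra.algebraMap_eq_smul_one]
      exact Submodule.smul_mem _ _ one_mem_Tspan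
  | add x y _ _ ihx ihy => exact add_mem ihx ihy
  | mul x y _ _ ihx ihy => exact Tspan_mul_mem _ ihx _ ihy

lemma mem_Cspan {x : A} (hx : x ∈ C2) : x ∈ Submodule.span F CM := by
  have hx' : x ∈ Algebra.adjoin F
      (({z 2 ^ 4} : Set A) ∪ {a | ∃ n : ℤ, 3 ≤ n ∧ a = z n ^ 2}) := hx
  clear hx
  induction hx' using Algebra.adjoin_induction with
  | mem g hg =>
      apply Submodule.subset_span
      rcases hg with hg | ⟨n, hn, rfl⟩
      · simp only [Set.mem_singleton_iff] at hg
        subst hg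
        refine ⟨Finsupp.single 2 4, ?_, by rw [z2_eq, X_pow_eq_monomial]⟩
        refine ⟨?_, ?_, ?_⟩
        · rw [Finsupp.single_apply, if_neg (by decide)]
        · rw [Finsupp.single_apply, if_pos rfl]
        · intro m hm
          rw [Finsupp.single_apply, if_neg (by rw [pc, pcoe2]; omega)]
          exact dvd_zero _
      · have hm : 3 ≤ ((n.toNat.toPNat' : ℕ)) := by
          rw [PNat.toPNat'_coe (by omega : 0 < n.toNat)]; omega
        refine ⟨Finsupp.single n.toNat.toPNat' 2, ?_, ?_⟩
        · refine ⟨?_, ?_, ?_⟩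
          · rw [Finsupp.single_apply, if_neg (by rw [pc, pcoe1]; omega)]
          · rw [Finsupp.single_apply, if_neg (by rw [pc, pcoe2]; omega)]; exact dvd_zero _
          · intro m hmm
            rw [Finsupp.single_apply]
            by_cases h : n.toNat.toPNat' = m
            · rw [if_pos h]
            · rw [if_neg h]; exact dvd_zero _
        · rw [z_pos' (by omega), X_pow_eq_monomial]
  | algebraMap r =>
      rw [Algebra.algebraMap_eq_smul_one]
      exact Submodule.smul_mem _ _ one_mem_Cspan
  | add x y _ _ ihx ihy => exact add_mem ihx ihy
  | mul x y _ _ ihx ihy => exact Cspan_mul_mem _ ihx _ ihy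

/-! #### Span-level consequences of the key identity -/

lemma hmap_mem_T {x : A} (hx : x ∈ Submodule.span F TM) : hmap x ∈ T := by
  induction hx using Submodule.span_induction with
  | mem a ha =>
      obtain ⟨d, hd, rfl⟩ := ha
      rw [hmap_monomial, hval]
      split_ifs with h1 h2
      · exact zero_mem _
      · exact monomial_mem_T (Tc_Hj hd ((Jm_bad d h1).resolve_left h2))
      · exact zero_mem _
  | zero => rw [map_zero]; exact zero_mem _
  | add a b _ _ iha ihb => rw [map_add]; exact add_mem iha ihb
  | smul r a _ iha => rw [map_smul]; exact Subalgebra.smul_mem _ iha r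

lemma Cc_of_reduced {d : ℕ+ →₀ ℕ} (hd : Tc d) (hnb : ¬ ∃ j, badp d j) : Cc d := by
  push_neg at hnb
  have h' : ∀ j : ℕ+, ¬ Odd (d (j + 3)) ∧ d j < 8 := by
    intro j
    have := hnb j
    rw [badp, not_or] at this
    exact ⟨this.1, by omega⟩
  refine ⟨?_, hd.2.1, ?_⟩
  · have h8 := (h' 1).2
    obtain ⟨k, hk⟩ := hd.1
    omega
  · intro n hn
    by_cases h : (n : ℕ) = 3
    · have h3 : n = 3 := by rw [pc, pcoe3]; exact h
      rw [h3]; exact hd.2.2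
    · have h4 : 4 ≤ (n : ℕ) := by omega
      have ho := (h' (n - 3)).1
      rw [pnat_sub_add h4] at ho
      rw [Nat.odd_iff] at ho
      omega

lemma Rmap_mem_C2 {x : A} (hx : x ∈ Submodule.span F TM) : Rmap x ∈ C2 := by
  induction hx using Submodule.span_induction with
  | mem a ha =>
      obtain ⟨d, hd, rfl⟩ := ha
      rw [Rmap_monomial, Rval]
      split_ifs with h1
      · exact zero_mem _
      · exact monomial_mem_C2 (Cc_of_reduced hd h1)
  | zero => rw [map_zero]; exact zero_mem _
  | add a b _ _ iha ihb => rw [map_add]; exact add_mem iha ihb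
  | smul r a _ iha => rw [map_smul]; exact Subalgebra.smul_mem _ iha r

lemma Q2_Rmap {x : A} (hx : x ∈ Submodule.span F TM) : Q2 (Rmap x) = 0 := by
  induction hx using Submodule.span_induction with
  | mem a ha =>
      obtain ⟨d, hd, rfl⟩ := ha
      rw [Rmap_monomial, Rval]
      split_ifs with h1
      · exact map_zero _
      · rw [Q2_monomial hd]
        have hJ : Jset d = ∅ := by
          apply Finset.eq_empty_of_forall_notMem
          intro j hj
          exact h1 ⟨j, Or.inl (mem_Jset.1 hj)⟩
        rw [hJ, Finset.sum_empty]
  | zero => rw [map_zero, map_zero]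
  | add a b _ _ iha ihb => rw [map_add, map_add, iha, ihb, add_zero]
  | smul r a _ iha => rw [map_smul, map_smul, iha, smul_zero]

/-- The homotopy identity, extended to all of (the span model of) `T`. -/
lemma ID {x : A} (hx : x ∈ Submodule.span F TM) :
    Q2 (hmap x) + hmap (Q2 x) = x + Rmap x := by
  induction hx using Submodule.span_induction with
  | mem a ha => obtain ⟨d, hd, rfl⟩ := ha; exact KEY hd
  | zero => simp
  | add a b _ _ iha ihb =>
      simp only [map_add]
      linear_combination iha + ihb
  | smul r a _ iha =>
      rcases (show ∀ s : F, s = 0 ∨ s = 1 by decide) r with rfl | rfl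
      · simp
      · simpa using iha

/-- The target ideal as a set of products. -/
def SSet : Set A := {a | ∃ (d : ℕ+ →₀ ℕ) (m : ℤ), Cc d ∧ 2 ≤ m ∧ a = monomial d 1 * z m ^ 8}

lemma add_R_mem_span {x : A} (hx : x ∈ Submodule.span F CM) :
    x + Rmap x ∈ Submodule.span F SSet := by
  induction hx using Submodule.span_induction with
  | mem a ha =>
      obtain ⟨d, hd, rfl⟩ := ha
      rw [Rmap_monomial, Rval]
      split_ifs with h1
      · rw [add_zero]
        obtain ⟨j, hb⟩ := h1
        have hO : ¬ Odd (d (j + 3)) := by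
          have h2 := hd.2.2 (j + 3) (by rw [padd3]; have := pone_le j; omega)
          rw [Nat.odd_iff]; omega
        have h8 : 8 ≤ d j := hb.resolve_left hO
        have hj1 : j ≠ 1 := by rintro rfl; rw [hd.1] at h8; omega
        have hj2 : 2 ≤ (j : ℕ) := by
          have := pone_le j; rw [ne_eq, pc, pcoe1] at hj1; omega
        apply Submodule.subset_span
        refine ⟨d - Finsupp.single j 8, ((j : ℕ) : ℤ), ?_, by exact_mod_cast hj2, ?_⟩
        · refine ⟨?_, ?_, ?_⟩
          · rw [Finsupp.tsub_apply, Finsupp.single_apply,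
              if_neg (by rw [pc, pcoe1]; omega), Nat.sub_zero]
            exact hd.1
          · rw [Finsupp.tsub_apply, Finsupp.single_apply]
            by_cases h : j = 2
            · rw [if_pos h]
              rw [h] at h8
              have := hd.2.1
              omega
            · rw [if_neg h, Nat.sub_zero]; exact hd.2.1
          · intro n hn
            rw [Finsupp.tsub_apply, Finsupp.single_apply]
            have hn2 := hd.2.2 n hn
            by_cases h : j = n
            · rw [if_pos h]; rw [h] at h8; omega
            · rw [if_neg h, Nat.sub_zero]; exact hn2
        · rw [z_coe, X_pow_eq_monomial, monomial_mul, one_mul]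
          have hd8 : (d - Finsupp.single j 8) + Finsupp.single j 8 = d := by
            ext x
            rw [Finsupp.add_apply, Finsupp.tsub_apply, Finsupp.single_apply]
            by_cases h : j = x
            · rw [if_pos h]; rw [← h]; omega
            · rw [if_neg h]; omega
          rw [hd8]
      · rw [two_zero]; exact zero_mem _
  | zero => rw [map_zero, add_zero]; exact zero_mem _
  | add a b _ _ iha ihb =>
      have h : (a + b) + Rmap (a + b) = (a + Rmap a) + (b + Rmap b) := by
        rw [map_add]; ring
      rw [h]; exact add_mem iha ihb
  | smul r a _ iha =>
      rcases (show ∀ s : F, s = 0 ∨ s = 1 by decide) r with rfl | rfl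
      · rw [zero_smul, map_zero, add_zero]; exact zero_mem _
      · rw [one_smul] at *; exact iha

end Aux

/-- `Q₂` Margolis homology of `tmf`.
`Q₂` restricts to `T` with `Q₂ ∘ Q₂ = 0`, the subalgebra `C2 = F₂[ζ₂⁴, ζ₃², ζ₄², …]` is
contained in `ker(Q₂|T)`, the induced algebra map `C2 → M(T, Q₂)` is surjective, and its
kernel is the ideal of `C2` generated by `{ζ₂⁸} ∪ {ζᵢ⁸ : i ≥ 3}` (an element `c ∈ C2` is a
boundary iff it is a finite sum `Σ fᵢ · ζ_{gᵢ}⁸` with `fᵢ ∈ C2`, `gᵢ ≥ 2`); hence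
`M(T, Q₂) ≅ F₂[ζ₂⁴, ζ₃², ζ₄², …]/(ζ₂⁸, ζ₃⁸, ζ₄⁸, …)` as `F₂`-algebras. -/
theorem Q2_margolis_tmf :
    (∀ x ∈ T, Q2 x ∈ T) ∧
    (∀ x ∈ T, Q2 (Q2 x) = 0) ∧
    (∀ x ∈ C2, x ∈ T ∧ Q2 x = 0) ∧
    (∀ x ∈ T, Q2 x = 0 → ∃ c ∈ C2, ∃ y ∈ T, x = c + Q2 y) ∧
    (∀ c ∈ C2, ((∃ y ∈ T, Q2 y = c) ↔
      ∃ (k : ℕ) (f : Fin k → A) (g : Fin k → ℤ),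
        (∀ i, f i ∈ C2 ∧ 2 ≤ g i) ∧ c = ∑ i, f i * z (g i) ^ 8)) := by
  -- Part 2 (in fact on all of `A`)
  have part2' : ∀ x : A, Q2 (Q2 x) = 0 := by
    intro x
    induction x using MvPolynomial.induction_on with
    | C a => rw [Q2_C, map_zero]
    | add p q hp hq => rw [map_add, map_add, hp, hq, add_zero]
    | mul_X p n hp =>
        have hQX : Q2 (X n : A) = z (((n : ℕ) : ℤ) - 3) ^ 8 := Q2_X n
        set w : A := z (((n : ℕ) : ℤ) - 3) ^ 8 with hw
        have hzw : Q2 w = 0 := by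
          rw [hw, show (z (((n : ℕ) : ℤ) - 3) : A) ^ 8
              = z (((n : ℕ) : ℤ) - 3) ^ 4 * z (((n : ℕ) : ℤ) - 3) ^ 4 by ring]
          exact Q2_mul_self _
        rw [Q2_mul, hQX, map_add, Q2_mul, Q2_mul, hQX, hzw, hp]
        have hcomm : w * Q2 p + Q2 p * w = 0 := by rw [mul_comm]; exact two_zero _
        linear_combination hcomm
  -- Part 1
  have part1 : ∀ x ∈ T, Q2 x ∈ T := by
    intro x hx
    have hx' : x ∈ Algebra.adjoin F
        (({z 1 ^ 8, z 2 ^ 4, z 3 ^ 2} : Set A) ∪ {a | ∃ n : ℤ, 4 ≤ n ∧ a = z n}) := hx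
    clear hx
    induction hx' using Algebra.adjoin_induction with
    | mem g hg =>
        rcases hg with hg | ⟨n, hn, rfl⟩
        · simp only [Set.mem_insert_iff, Set.mem_singleton_iff] at hg
          rcases hg with rfl | rfl | rfl
          · rw [show (z 1 ^ 8 : A) = z 1 ^ 4 * z 1 ^ 4 by ring, Q2_mul_self]
            exact zero_mem _
          · rw [show (z 2 ^ 4 : A) = z 2 ^ 2 * z 2 ^ 2 by ring, Q2_mul_self]
            exact zero_mem _
          · rw [show (z 3 ^ 2 : A) = z 3 * z 3 by ring, Q2_mul_self]
            exact zero_mem _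
        · rw [Q2_z (by omega)]
          by_cases h4 : 4 ≤ n - 3
          · exact pow_mem (gen_zn_T h4) 8
          · have h456 : n = 4 ∨ n = 5 ∨ n = 6 := by omega
            rcases h456 with rfl | rfl | rfl
            · rw [show (4 : ℤ) - 3 = 1 by norm_num]
              exact gen_z18_T
            · rw [show (5 : ℤ) - 3 = 2 by norm_num,
                show (z 2 ^ 8 : A) = z 2 ^ 4 * z 2 ^ 4 by ring]
              exact mul_mem gen_z24_T gen_z24_T
            · rw [show (6 : ℤ) - 3 = 3 by norm_num,
                show (z 3 ^ 8 : A) = (z 3 ^ 2) ^ 4 by ring]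
              exact pow_mem gen_z32_T 4
    | algebraMap r =>
        rw [show (algebraMap F A r) = C r from rfl, Q2_C]
        exact zero_mem _
    | add x y hx hy ihx ihy => rw [map_add]; exact add_mem ihx ihy
    | mul x y hx hy ihx ihy =>
        rw [Q2_mul]
        exact add_mem (mul_mem hx ihy) (mul_mem hy ihx)
  -- Part 3
  have part3 : ∀ x ∈ C2, x ∈ T ∧ Q2 x = 0 := by
    intro x hx
    have hx' : x ∈ Algebra.adjoin F
        (({z 2 ^ 4} : Set A) ∪ {a | ∃ n : ℤ, 3 ≤ n ∧ a = z n ^ 2}) := hx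
    clear hx
    induction hx' using Algebra.adjoin_induction with
    | mem g hg =>
        rcases hg with hg | ⟨n, hn, rfl⟩
        · simp only [Set.mem_singleton_iff] at hg
          subst hg
          refine ⟨gen_z24_T, ?_⟩
          rw [show (z 2 ^ 4 : A) = z 2 ^ 2 * z 2 ^ 2 by ring]
          exact Q2_mul_self _
        · constructor
          · by_cases h4 : 4 ≤ n
            · exact pow_mem (gen_zn_T h4) 2
            · have h3 : n = 3 := by omega
              subst h3
              exact gen_z32_T
          · rw [show (z n ^ 2 : A) = z n * z n by ring]
            exact Q2_mul_self _
    | algebraMap r =>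
        exact ⟨Subalgebra.algebraMap_mem T r, by rw [show (algebraMap F A r : A) = C r from rfl, Q2_C]⟩
    | add x y hx hy ihx ihy =>
        exact ⟨add_mem ihx.1 ihy.1, by rw [map_add, ihx.2, ihy.2, add_zero]⟩
    | mul x y hx hy ihx ihy =>
        exact ⟨mul_mem ihx.1 ihy.1,
          by rw [Q2_mul, ihx.2, ihy.2, mul_zero, mul_zero, add_zero]⟩
  -- Part 4
  have part4 : ∀ x ∈ T, Q2 x = 0 → ∃ c ∈ C2, ∃ y ∈ T, x = c + Q2 y := by
    intro x hx hQ
    have hxs := mem_Tspan hx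
    have hid := ID hxs
    rw [hQ, map_zero, add_zero] at hid
    refine ⟨Rmap x, Rmap_mem_C2 hxs, hmap x, hmap_mem_T hxs, ?_⟩
    rw [hid, add_comm x (Rmap x), ← add_assoc, two_zero, zero_add]
  refine ⟨part1, fun x _ => part2' (Q2 x) ▸ part2' x, part3, part4, ?_⟩
  -- Part 5
  intro c hc
  constructor
  · rintro ⟨y, hyT, hyQ⟩
    have hcT := (part3 c hc).1
    have hcQ := (part3 c hc).2
    have hys := mem_Tspan hyT
    have idy := ID hys
    have idc := ID (mem_Tspan hcT)
    have e1 : Q2 (hmap c) = c := by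
      have h := congrArg (fun t => Q2 t) idy
      simp only [map_add] at h
      rw [part2' (hmap y), hyQ, Q2_Rmap hys, add_zero, zero_add] at h
      exact h
    have e2 : Rmap c = 0 := by
      rw [hcQ, map_zero, add_zero, e1] at idc
      exact (left_eq_add.1 idc)
    have hspan : c ∈ Submodule.span F SSet := by
      have h := add_R_mem_span (mem_Cspan hc)
      rwa [e2, add_zero] at h
    obtain ⟨k, f, g, hsum⟩ := Submodule.mem_span_set'.1 hspan
    choose dch mch h1ch h2ch h3ch using fun i => (g i).2
    refine ⟨k, fun i => f i • monomial (dch i) 1, fun i => mch i, fun i => ?_, ?_⟩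
    · exact ⟨Subalgebra.smul_mem _ (monomial_mem_C2 (h1ch i)) _, h2ch i⟩
    · rw [← hsum]
      apply Finset.sum_congr rfl
      intro i _
      rw [h3ch i, smul_mul_assoc]
  · rintro ⟨k, f, g, hfg, rfl⟩
    refine ⟨∑ i, f i * z (g i + 3), ?_, ?_⟩
    · apply sum_mem
      intro i _
      exact mul_mem ((part3 _ (hfg i).1).1)
        (gen_zn_T (by have := (hfg i).2; omega))
    · rw [map_sum]
      apply Finset.sum_congr rfl
      intro i _
      rw [Q2_mul, Q2_z (by have := (hfg i).2; omega), (part3 _ (hfg i).1).2, mul_zero,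
        add_zero, show g i + 3 - 3 = g i by ring]

end Tmf

end
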